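/- Let f : ℝⁿ → ℝ be differentiable and L-smooth with L > 0, and suppose f ∈ W_PL(μ) with μ > 0 and associated global minimizer x*. Let x^{k+1} = x^k − (1/L)∇f(x^k) for all k ≥ 0, starting from x⁰ ∈ ℝⁿ, and let ξ(x) := f(x) − f(x*). Fix K ≥ 1 and assume f(xᵗ) > f(x*) for all t = 0, …, K−1. Then ξ(x^K) ≤ ξ(x⁰) / (1 + ξ(x⁰)·(μ/(2L))·Σ_{t=0}^{K−1} 1/‖xᵗ − x*‖²). -/

import Mathlib

open scoped RealInnerProductSpace BigOperators

lemma aux_step (ξ0 ξk ξk1 S c : ℝ) (hξ0 : 0 < ξ0) (hξk : 0 < ξk) (hξk1 : 0 ≤ ξk1)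
    (hc : 0 < c) (hS : 0 ≤ S) (hstep : ξk1 ≤ ξk - c * ξk ^ 2)
    (hind : ξk ≤ ξ0 / (1 + ξ0 * S)) : ξk1 ≤ ξ0 / (1 + ξ0 * (S + c)) := by
  have hD : (0:ℝ) < 1 + ξ0 * S := by positivity
  have hB : ξk * (1 + ξ0 * S) ≤ ξ0 := (le_div_iff₀ hD).mp hind
  have hD' : (0:ℝ) < 1 + ξ0 * (S + c) := by positivity
  rw [le_div_iff₀ hD']
  rcases eq_or_lt_of_le hξk1 with h0 | h0
  · nlinarith
  · have h1c : 0 < 1 - c * ξk := by nlinarith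
    nlinarith [mul_nonneg (sub_nonneg.mpr hB) h1c.le,
      mul_pos (mul_pos hc hc) (mul_pos (mul_pos hξk hξk) hξ0)]

set_option maxHeartbeats 1000000 in
theorem gradient_descent_WPL_rate {n : ℕ} (f : EuclideanSpace ℝ (Fin n) → ℝ) (L μ : ℝ)
    (hL : 0 < L) (hμ : 0 < μ) (hdiff : Differentiable ℝ f)
    (hsmooth : ∀ x h : EuclideanSpace ℝ (Fin n),
      f (x + h) ≤ f x + ⟪gradient f x, h⟫ + L / 2 * ‖h‖ ^ 2)
    (xstar : EuclideanSpace ℝ (Fin n)) (hmin : ∀ y, f xstar ≤ f y)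
    (hWPL : ∀ x : EuclideanSpace ℝ (Fin n),
      Real.sqrt μ * (f x - f xstar) ≤ ‖gradient f x‖ * ‖x - xstar‖)
    (x : ℕ → EuclideanSpace ℝ (Fin n))
    (hiter : ∀ k : ℕ, x (k + 1) = x k - (1 / L) • gradient f (x k))
    (K : ℕ) (hK : 1 ≤ K)
    (hpos : ∀ t < K, f xstar < f (x t)) :
    f (x K) - f xstar ≤
      (f (x 0) - f xstar) /
        (1 + (f (x 0) - f xstar) * (μ / (2 * L)) *
          ∑ t ∈ Finset.range K, 1 / ‖x t - xstar‖ ^ 2) := by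
  set ξ0 := f (x 0) - f xstar with hξ0def
  have hξ0 : 0 < ξ0 := sub_pos.mpr (hpos 0 hK)
  -- descent lemma
  have hdesc : ∀ k : ℕ, f (x (k + 1)) ≤ f (x k) - ‖gradient f (x k)‖ ^ 2 / (2 * L) := by
    intro k
    have h := hsmooth (x k) (-((1 / L) • gradient f (x k)))
    rw [← sub_eq_add_neg, ← hiter k] at h
    have hinner : ⟪gradient f (x k), -((1 / L) • gradient f (x k))⟫
        = -(1 / L) * ‖gradient f (x k)‖ ^ 2 := by
      rw [inner_neg_right, real_inner_smul_right, real_inner_self_eq_norm_sq]; ring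
    have hnorm : ‖-((1 / L) • gradient f (x k))‖ ^ 2 = (1 / L) ^ 2 * ‖gradient f (x k)‖ ^ 2 := by
      rw [norm_neg, norm_smul, Real.norm_eq_abs, abs_of_pos (by positivity : (0:ℝ) < 1 / L)]
      ring
    rw [hinner, hnorm] at h
    have hL' := hL.ne'
    calc f (x (k + 1)) ≤ f (x k) + -(1 / L) * ‖gradient f (x k)‖ ^ 2
          + L / 2 * ((1 / L) ^ 2 * ‖gradient f (x k)‖ ^ 2) := h
      _ = f (x k) - ‖gradient f (x k)‖ ^ 2 / (2 * L) := by field_simp; ring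
  have main : ∀ k, k ≤ K → f (x k) - f xstar ≤
      ξ0 / (1 + ξ0 * ((μ / (2 * L)) * ∑ t ∈ Finset.range k, 1 / ‖x t - xstar‖ ^ 2)) := by
    intro k
    induction k with
    | zero => simp; linarith [hξ0def]
    | succ k ih =>
      intro hk
      have hkK : k < K := hk
      have hik := ih (Nat.le_of_succ_le hk)
      have hξk : 0 < f (x k) - f xstar := sub_pos.mpr (hpos k hkK)
      have hd : 0 < ‖x k - xstar‖ := by
        rcases eq_or_lt_of_le (norm_nonneg (x k - xstar)) with h | h
        · exfalso
          have := hWPL (x k)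
          rw [← h] at this
          nlinarith [Real.sqrt_pos.mpr hμ]
        · exact h
      have hd2 : 0 < ‖x k - xstar‖ ^ 2 := by positivity
      -- WPL squared
      have hw := hWPL (x k)
      have hw2 : μ * (f (x k) - f xstar) ^ 2 ≤ ‖gradient f (x k)‖ ^ 2 * ‖x k - xstar‖ ^ 2 := by
        have h1 : (Real.sqrt μ * (f (x k) - f xstar)) ^ 2
            ≤ (‖gradient f (x k)‖ * ‖x k - xstar‖) ^ 2 := by
          apply sq_le_sq' _ hw
          nlinarith [Real.sqrt_nonneg μ, norm_nonneg (gradient f (x k)),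
            norm_nonneg (x k - xstar)]
        have h2 : Real.sqrt μ ^ 2 = μ := Real.sq_sqrt hμ.le
        nlinarith
      set c := (μ / (2 * L)) * (1 / ‖x k - xstar‖ ^ 2) with hcdef
      have hc : 0 < c := by positivity
      have hstep : f (x (k + 1)) - f xstar ≤ (f (x k) - f xstar) - c * (f (x k) - f xstar) ^ 2 := by
        have h1 := hdesc k
        have h2 : c * (f (x k) - f xstar) ^ 2 ≤ ‖gradient f (x k)‖ ^ 2 / (2 * L) := by
          have heq : c * (f (x k) - f xstar) ^ 2
              = μ * (f (x k) - f xstar) ^ 2 / (2 * L * ‖x k - xstar‖ ^ 2) := by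
            rw [hcdef]; field_simp
          rw [heq, div_le_div_iff₀ (by positivity) (by positivity)]
          nlinarith
        linarith
      have hsum : (0:ℝ) ≤ ∑ t ∈ Finset.range k, 1 / ‖x t - xstar‖ ^ 2 :=
        Finset.sum_nonneg fun t _ => by positivity
      have hS : (0:ℝ) ≤ (μ / (2 * L)) * ∑ t ∈ Finset.range k, 1 / ‖x t - xstar‖ ^ 2 :=
        mul_nonneg (by positivity) hsum
      have hk1 : (0:ℝ) ≤ f (x (k + 1)) - f xstar := sub_nonneg.mpr (hmin (x (k + 1)))
      have hgoal := aux_step ξ0 (f (x k) - f xstar) (f (x (k + 1)) - f xstar)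
        ((μ / (2 * L)) * ∑ t ∈ Finset.range k, 1 / ‖x t - xstar‖ ^ 2) c
        hξ0 hξk hk1 hc hS hstep hik
      rw [Finset.sum_range_succ, mul_add]
      exact hgoal
  have h := main K le_rfl
  rw [mul_assoc]
  exact h
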